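/- Let (Y;S) be a faithful primitive representation of a finite semigroup on a finite set Y with |Y| > 2 and let J be its set of minimal functions. Then for each pair of distinct nonconstant transformations s, t ∈ γ(S) there exist j, k ∈ J such that j∘s ≠ j∘t and s∘k ≠ t∘k. -/
import Mathlib


section TransformationReps

variable {Y : Type*}

/-- A constant function. -/
def IsConst (f : Y → Y) : Prop := ∃ c, ∀ y, f y = c

/-- `W` is a minimal set of the representation given by the set `T` of transformations:
it is a non-singleton image set which is minimal among non-singleton image sets. -/
def MinSet (T : Set (Y → Y)) (W : Set Y) : Prop :=
  2 ≤ W.ncard ∧ (∃ s ∈ T, Set.range s = W) ∧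
    ∀ t ∈ T, 2 ≤ (Set.range t).ncard → Set.range t ⊆ W → Set.range t = W

/-- A minimal function: an element of `T` whose image is a minimal set. -/
def MinFun (T : Set (Y → Y)) (f : Y → Y) : Prop :=
  f ∈ T ∧ MinSet T (Set.range f)

end TransformationReps

/-- Let `(Y;S)` be a faithful primitive representation with `|Y| > 2` and `J` its set of
minimal functions.  For distinct nonconstant transformations `s, t ∈ γ(S)` there exist
`j, k ∈ J` with `j∘s ≠ j∘t` and `s∘k ≠ t∘k`. -/
theorem minimal_functions_separate_semigroup {S Y : Type*} [Semigroup S] [Fintype S]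
    [Fintype Y] (γ : S → Y → Y) (hγ : ∀ s t : S, γ (s * t) = γ s ∘ γ t)
    (hfaithful : Function.Injective γ)
    (hcard : 2 < Fintype.card Y)
    (hprim : ∀ θ : Y → Y → Prop, Equivalence θ →
      (∀ a b, θ a b → ∀ s : S, θ (γ s a) (γ s b)) →
      (∀ a b, θ a b → a = b) ∨ (∀ a b, θ a b)) :
    ∀ s ∈ Set.range γ, ∀ t ∈ Set.range γ, s ≠ t → ¬ IsConst s → ¬ IsConst t →
      ∃ j k : Y → Y, MinFun (Set.range γ) j ∧ MinFun (Set.range γ) k ∧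
        j ∘ s ≠ j ∘ t ∧ s ∘ k ≠ t ∘ k := by
  intro s hs t ht hst hncs hnct
  classical
  set T : Set (Y → Y) := Set.range γ with hT
  have hclosed : ∀ u ∈ T, ∀ v ∈ T, u ∘ v ∈ T := by
    rintro _ ⟨a, rfl⟩ _ ⟨b, rfl⟩; exact ⟨a * b, hγ a b⟩
  have hfin : ∀ A : Set Y, A.Finite := fun A => A.toFinite
  -- nonconstant functions have image of size at least 2
  have hnc : ∀ f : Y → Y, ¬ IsConst f → 2 ≤ (Set.range f).ncard := by
    intro f hf
    have hY : Nonempty Y := Fintype.card_pos_iff.mp (by omega)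
    obtain ⟨y₀⟩ := hY
    simp only [IsConst] at hf
    push_neg at hf
    obtain ⟨y₁, hy₁⟩ := hf (f y₀)
    have h1 : 1 < (Set.range f).ncard := by
      rw [Set.one_lt_ncard_iff (hfin _)]
      exact ⟨f y₁, f y₀, ⟨y₁, rfl⟩, ⟨y₀, rfl⟩, hy₁⟩
    omega
  -- m : the minimal size of a non-singleton image
  have hPex : ∃ n, 2 ≤ n ∧ ∃ u ∈ T, (Set.range u).ncard = n :=
    ⟨(Set.range s).ncard, hnc s hncs, s, hs, rfl⟩
  set m := Nat.find hPex with hm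
  obtain ⟨hm2, j₀, hj₀T, hj₀m⟩ := Nat.find_spec hPex
  have hminle : ∀ u ∈ T, 2 ≤ (Set.range u).ncard → m ≤ (Set.range u).ncard :=
    fun u hu h2 => Nat.find_le ⟨h2, u, hu, rfl⟩
  set Jm : Set (Y → Y) := {f | f ∈ T ∧ (Set.range f).ncard = m} with hJm
  have hj₀J : j₀ ∈ Jm := ⟨hj₀T, hj₀m⟩
  -- members of Jm are minimal functions
  have hJmMin : ∀ f ∈ Jm, MinFun T f := by
    rintro f ⟨hfT, hfm⟩
    refine ⟨hfT, ?_, ⟨f, hfT, rfl⟩, ?_⟩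
    · rw [hfm]; exact hm2
    · intro u hu h2 hsub
      have h1 : (Set.range u).ncard ≤ (Set.range f).ncard :=
        Set.ncard_le_ncard hsub (hfin _)
      have h3 := hminle u hu h2
      exact Set.eq_of_subset_of_ncard_le hsub (by omega) (hfin _)
  -- composing a minimal function with anything on the left: constant or minimal
  have hcompL : ∀ f ∈ Jm, ∀ u ∈ T, IsConst (u ∘ f) ∨ u ∘ f ∈ Jm := by
    rintro f ⟨hfT, hfm⟩ u hu
    by_cases hc : IsConst (u ∘ f)
    · exact Or.inl hc
    · refine Or.inr ⟨hclosed u hu f hfT, ?_⟩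
      have h2 := hnc _ hc
      have hle : (Set.range (u ∘ f)).ncard ≤ (Set.range f).ncard := by
        rw [Set.range_comp]; exact Set.ncard_image_le (hfin _)
      have h3 := hminle _ (hclosed u hu f hfT) h2
      omega
  -- composing on the right: constant or minimal
  have hcompR : ∀ f ∈ Jm, ∀ u ∈ T, IsConst (f ∘ u) ∨ f ∘ u ∈ Jm := by
    rintro f ⟨hfT, hfm⟩ u hu
    by_cases hc : IsConst (f ∘ u)
    · exact Or.inl hc
    · refine Or.inr ⟨hclosed f hfT u hu, ?_⟩
      have h2 := hnc _ hc
      have hle : (Set.range (f ∘ u)).ncard ≤ (Set.range f).ncard :=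
        Set.ncard_le_ncard (Set.range_comp_subset_range u f) (hfin _)
      have h3 := hminle _ (hclosed f hfT u hu) h2
      omega
  -- LEFT separation: points separated by minimal functions
  have hleft : ∀ a b : Y, a ≠ b → ∃ j ∈ Jm, j a ≠ j b := by
    intro a b hab
    by_contra hcon
    push_neg at hcon
    set θ : Y → Y → Prop := fun x y => ∀ j ∈ Jm, j x = j y with hθ
    have hEq : Equivalence θ :=
      ⟨fun x j hj => rfl, fun {x y} h j hj => (h j hj).symm,
        fun {x y z} h1 h2 j hj => (h1 j hj).trans (h2 j hj)⟩
    have hCompat : ∀ x y, θ x y → ∀ v : S, θ (γ v x) (γ v y) := by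
      intro x y hxy v j hj
      have hv : γ v ∈ T := ⟨v, rfl⟩
      rcases hcompR j hj (γ v) hv with ⟨c, hc⟩ | hmem
      · have h1 := hc x
        have h2 := hc y
        simp only [Function.comp_apply] at h1 h2
        rw [h1, h2]
      · have := hxy (j ∘ γ v) hmem
        simpa using this
    rcases hprim θ hEq hCompat with hd | hall
    · exact hab (hd a b hcon)
    · obtain ⟨a', b', ⟨x, rfl⟩, ⟨x', rfl⟩, hab'⟩ :=
        (Set.one_lt_ncard_iff (hfin _)).mp
          (by omega : 1 < (Set.range j₀).ncard)
      exact hab' (hall x x' j₀ hj₀J)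
  obtain ⟨y, hy⟩ := Function.ne_iff.mp hst
  -- RIGHT separation
  have hright : ∃ k ∈ Jm, s ∘ k ≠ t ∘ k := by
    by_contra hcon
    push_neg at hcon
    set M : Set Y := {z | ∃ j ∈ Jm, z ∈ Set.range j} with hM
    have hsM : ∀ z ∈ M, s z = t z := by
      rintro z ⟨j, hj, x, rfl⟩
      have := congrFun (hcon j hj) x
      simpa using this
    set θ : Y → Y → Prop := fun a b =>
      ∀ u : Y → Y, (u ∈ T ∨ u = id) → (u a = u b ∨ (u a ∈ M ∧ u b ∈ M)) with hθ
    have hEq : Equivalence θ := by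
      refine ⟨fun a u hu => Or.inl rfl, fun {a b} hab u hu => ?_, fun {a b c} hab hbc u hu => ?_⟩
      · rcases hab u hu with h1 | h1
        · exact Or.inl h1.symm
        · exact Or.inr ⟨h1.2, h1.1⟩
      · rcases hab u hu with h1 | h1 <;> rcases hbc u hu with h2 | h2
        · exact Or.inl (h1.trans h2)
        · exact Or.inr ⟨by rw [h1]; exact h2.1, h2.2⟩
        · exact Or.inr ⟨h1.1, by rw [← h2]; exact h1.2⟩
        · exact Or.inr ⟨h1.1, h2.2⟩
    have hCompat : ∀ a b, θ a b → ∀ v : S, θ (γ v a) (γ v b) := by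
      intro a b hab v u hu
      have hv : γ v ∈ T := ⟨v, rfl⟩
      rcases hu with hu | rfl
      · have := hab (u ∘ γ v) (Or.inl (hclosed u hu _ hv))
        simpa using this
      · have := hab (γ v) (Or.inl hv)
        simpa using this
    -- θ is nontrivial
    obtain ⟨a, b, ⟨x, rfl⟩, ⟨x', rfl⟩, hab⟩ :=
      (Set.one_lt_ncard_iff (hfin _)).mp (by omega : 1 < (Set.range j₀).ncard)
    have hθab : θ (j₀ x) (j₀ x') := by
      intro u hu
      rcases hu with hu | rfl
      · rcases hcompL j₀ hj₀J u hu with ⟨c, hc⟩ | hmem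
        · left
          have h1 := hc x
          have h2 := hc x'
          simp only [Function.comp_apply] at h1 h2
          rw [h1, h2]
        · exact Or.inr ⟨⟨u ∘ j₀, hmem, x, rfl⟩, ⟨u ∘ j₀, hmem, x', rfl⟩⟩
      · exact Or.inr ⟨⟨j₀, hj₀J, x, rfl⟩, ⟨j₀, hj₀J, x', rfl⟩⟩
    rcases hprim θ hEq hCompat with hd | hall
    · exact hab (hd _ _ hθab)
    · obtain ⟨b', hb'⟩ := Fintype.exists_ne_of_one_lt_card (by omega) y
      rcases hall y b' id (Or.inr rfl) with h1 | h1
      · exact hb' (by simpa using h1.symm)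
      · exact hy (hsM y h1.1)
  obtain ⟨j, hjJ, hjne⟩ := hleft (s y) (t y) hy
  obtain ⟨k, hkJ, hkne⟩ := hright
  exact ⟨j, k, hJmMin j hjJ, hJmMin k hkJ, fun h => hjne (congrFun h y), hkne⟩
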